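/- A HyperLTL formula ψ is satisfiable by some nonempty trace set of cardinality at most m if and only if ψ is satisfiable by a nonempty set of at most m ultimately periodic traces. -/

import Mathlib

/-- A trace over atomic propositions (modeled as naturals). -/
abbrev Trace : Type := ℕ → Set ℕ

/-- HyperLTL formulas: atomic propositions `a` and trace variables `π` are naturals. -/
inductive HLTL : Type
  | tt    : HLTL
  | atom  : ℕ → ℕ → HLTL            -- `atom a π` is `a_π`
  | neg   : HLTL → HLTL
  | or    : HLTL → HLTL → HLTL
  | next  : HLTL → HLTL
  | until_ : HLTL → HLTL → HLTL
  | ex    : ℕ → HLTL → HLTL          -- `∃ π. ψ`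
  | all   : ℕ → HLTL → HLTL          -- `∀ π. ψ`

namespace HLTL

/-- Shift every trace in the range of an assignment by `i` steps. -/
def shift (A : ℕ → Trace) (i : ℕ) : ℕ → Trace := fun π n => A π (n + i)

/-- Semantics of HyperLTL: `sat T ψ A` is `A ⊨_T ψ`. -/
def sat (T : Set Trace) : HLTL → (ℕ → Trace) → Prop
  | .tt, _ => True
  | .atom a π, A => a ∈ A π 0
  | .neg φ, A => ¬ sat T φ A
  | .or φ ψ, A => sat T φ A ∨ sat T ψ A
  | .next φ, A => sat T φ (shift A 1)
  | .until_ φ ψ, A => ∃ i, sat T ψ (shift A i) ∧ ∀ j < i, sat T φ (shift A j)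
  | .ex π φ, A => ∃ t ∈ T, sat T φ (Function.update A π t)
  | .all π φ, A => ∀ t ∈ T, sat T φ (Function.update A π t)

/-- Quantifier-free formulas. -/
def quantFree : HLTL → Bool
  | .tt => true
  | .atom _ _ => true
  | .neg φ => quantFree φ
  | .or φ ψ => quantFree φ && quantFree ψ
  | .next φ => quantFree φ
  | .until_ φ ψ => quantFree φ && quantFree ψ
  | .ex _ _ => false
  | .all _ _ => false

/-- All trace quantifiers occur in a prefix. -/
def prenex : HLTL → Bool
  | .ex _ φ => prenex φ
  | .all _ φ => prenex φ
  | φ => quantFree φ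

/-- Free trace variables of a formula. -/
def free : HLTL → Finset ℕ
  | .tt => ∅
  | .atom _ π => {π}
  | .neg φ => free φ
  | .or φ ψ => free φ ∪ free ψ
  | .next φ => free φ
  | .until_ φ ψ => free φ ∪ free ψ
  | .ex π φ => (free φ).erase π
  | .all π φ => (free φ).erase π

/-- A HyperLTL formula (as in the grammar): a closed sentence with all
trace quantifiers in a prefix. -/
def Sentence (ψ : HLTL) : Prop := prenex ψ = true ∧ free ψ = ∅

/-- `T` satisfies `ψ`: `T` is nonempty and `∅ ⊨_T ψ` (for closed `ψ` the
trace assignment is irrelevant, so we quantify over all assignments). -/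
def SatBy (T : Set Trace) (ψ : HLTL) : Prop :=
  T.Nonempty ∧ ∀ A : ℕ → Trace, sat T ψ A

/-- HyperLTL satisfiability. -/
def Satisfiable (ψ : HLTL) : Prop := ∃ T : Set Trace, SatBy T ψ

/-- A computable injective Gödel encoding of HyperLTL formulas. -/
def encode : HLTL → ℕ
  | .tt => 0
  | .atom a π => 8 * Nat.pair a π + 1
  | .neg φ => 8 * encode φ + 2
  | .or φ ψ => 8 * Nat.pair (encode φ) (encode ψ) + 3
  | .next φ => 8 * encode φ + 4
  | .until_ φ ψ => 8 * Nat.pair (encode φ) (encode ψ) + 5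
  | .ex π φ => 8 * Nat.pair π (encode φ) + 6
  | .all π φ => 8 * Nat.pair π (encode φ) + 7

end HLTL

/-- The set of Gödel codes of satisfiable (closed, prenex) HyperLTL formulas. -/
def HyperLTLSatCode (n : ℕ) : Prop :=
  ∃ ψ : HLTL, HLTL.Sentence ψ ∧ HLTL.encode ψ = n ∧ HLTL.Satisfiable ψ

/-- A predicate on ℕ is computably enumerable iff it is the domain of a
partial computable function. -/
def REpred (p : ℕ → Prop) : Prop :=
  ∃ f : ℕ →. ℕ, Partrec f ∧ ∀ n, p n ↔ (f n).Dom

/-- A trace is ultimately periodic iff there are `s ≥ 0` and `p ≥ 1` with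
`t (i + p) = t i` for all `i ≥ s`. -/
def UltimatelyPeriodic (t : Trace) : Prop :=
  ∃ s : ℕ, ∃ p : ℕ, 1 ≤ p ∧ ∀ i, s ≤ i → t (i + p) = t i


/-! ### Auxiliary development -/

deriving instance DecidableEq for HLTL

namespace HLTLAux
open HLTL

/-- Subformula closure. -/
def subs : HLTL → Finset HLTL
  | .tt => {.tt}
  | .atom a π => {.atom a π}
  | .neg φ => insert (.neg φ) (subs φ)
  | .or φ ψ => insert (.or φ ψ) (subs φ ∪ subs ψ)
  | .next φ => insert (.next φ) (subs φ)
  | .until_ φ ψ => insert (.until_ φ ψ) (subs φ ∪ subs ψ)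
  | .ex π φ => insert (.ex π φ) (subs φ)
  | .all π φ => insert (.all π φ) (subs φ)

lemma self_mem_subs : ∀ φ : HLTL, φ ∈ subs φ := by
  intro φ; cases φ <;> simp [subs]

lemma subs_trans : ∀ (φ χ χ' : HLTL), χ' ∈ subs χ → χ ∈ subs φ → χ' ∈ subs φ := by
  intro φ
  induction φ with
  | tt => intro χ χ' h1 h2; simp [subs] at h2; subst h2; exact h1
  | atom a π => intro χ χ' h1 h2; simp [subs] at h2; subst h2; exact h1
  | neg φ ih =>
      intro χ χ' h1 h2; simp [subs] at h2 ⊢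
      rcases h2 with h2 | h2
      · subst h2; simpa [subs] using h1
      · exact Or.inr (ih _ _ h1 h2)
  | or φ ψ ihφ ihψ =>
      intro χ χ' h1 h2; simp [subs] at h2 ⊢
      rcases h2 with h2 | h2 | h2
      · subst h2; simpa [subs] using h1
      · exact Or.inr (Or.inl (ihφ _ _ h1 h2))
      · exact Or.inr (Or.inr (ihψ _ _ h1 h2))
  | next φ ih =>
      intro χ χ' h1 h2; simp [subs] at h2 ⊢
      rcases h2 with h2 | h2
      · subst h2; simpa [subs] using h1
      · exact Or.inr (ih _ _ h1 h2)
  | until_ φ ψ ihφ ihψ =>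
      intro χ χ' h1 h2; simp [subs] at h2 ⊢
      rcases h2 with h2 | h2 | h2
      · subst h2; simpa [subs] using h1
      · exact Or.inr (Or.inl (ihφ _ _ h1 h2))
      · exact Or.inr (Or.inr (ihψ _ _ h1 h2))
  | ex π φ ih =>
      intro χ χ' h1 h2; simp [subs] at h2 ⊢
      rcases h2 with h2 | h2
      · subst h2; simpa [subs] using h1
      · exact Or.inr (ih _ _ h1 h2)
  | all π φ ih =>
      intro χ χ' h1 h2; simp [subs] at h2 ⊢
      rcases h2 with h2 | h2
      · subst h2; simpa [subs] using h1
      · exact Or.inr (ih _ _ h1 h2)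

lemma neg_mem_subs {φ α : HLTL} (h : .neg α ∈ subs φ) : α ∈ subs φ :=
  subs_trans _ _ _ (by simp [subs, self_mem_subs]) h
lemma or_mem_subs {φ α β : HLTL} (h : .or α β ∈ subs φ) : α ∈ subs φ ∧ β ∈ subs φ :=
  ⟨subs_trans _ _ _ (by simp [subs, self_mem_subs]) h,
   subs_trans _ _ _ (by simp [subs, self_mem_subs]) h⟩
lemma next_mem_subs {φ α : HLTL} (h : .next α ∈ subs φ) : α ∈ subs φ :=
  subs_trans _ _ _ (by simp [subs, self_mem_subs]) h
lemma until_mem_subs {φ α β : HLTL} (h : .until_ α β ∈ subs φ) : α ∈ subs φ ∧ β ∈ subs φ :=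
  ⟨subs_trans _ _ _ (by simp [subs, self_mem_subs]) h,
   subs_trans _ _ _ (by simp [subs, self_mem_subs]) h⟩
lemma ex_mem_subs {φ α : HLTL} {π : ℕ} (h : .ex π α ∈ subs φ) : α ∈ subs φ :=
  subs_trans _ _ _ (by simp [subs, self_mem_subs]) h
lemma all_mem_subs {φ α : HLTL} {π : ℕ} (h : .all π α ∈ subs φ) : α ∈ subs φ :=
  subs_trans _ _ _ (by simp [subs, self_mem_subs]) h

/-- All variables occurring in atoms. -/
def vars : HLTL → Finset ℕ
  | .tt => ∅
  | .atom _ π => {π}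
  | .neg φ => vars φ
  | .or φ ψ => vars φ ∪ vars ψ
  | .next φ => vars φ
  | .until_ φ ψ => vars φ ∪ vars ψ
  | .ex _ φ => vars φ
  | .all _ φ => vars φ

lemma free_subset_vars : ∀ φ : HLTL, free φ ⊆ vars φ := by
  intro φ
  induction φ with
  | tt => simp [free, vars]
  | atom a π => simp [free, vars]
  | neg φ ih => simpa [free, vars] using ih
  | or φ ψ ihφ ihψ => simp [free, vars]; exact Finset.union_subset_union ihφ ihψ
  | next φ ih => simpa [free, vars] using ih
  | until_ φ ψ ihφ ihψ => simp [free, vars]; exact Finset.union_subset_union ihφ ihψ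
  | ex π φ ih => exact (Finset.erase_subset _ _).trans ih
  | all π φ ih => exact (Finset.erase_subset _ _).trans ih

lemma vars_subs : ∀ (φ χ : HLTL), χ ∈ subs φ → vars χ ⊆ vars φ := by
  intro φ
  induction φ with
  | tt => intro χ h; simp [subs] at h; subst h; simp
  | atom a π => intro χ h; simp [subs] at h; subst h; simp
  | neg φ ih =>
      intro χ h; simp [subs] at h
      rcases h with h | h
      · subst h; simp [vars]
      · simpa [vars] using ih _ h
  | or φ ψ ihφ ihψ =>
      intro χ h; simp [subs] at h
      rcases h with h | h | h
      · subst h; simp [vars]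
      · exact (ihφ _ h).trans (by simp [vars])
      · exact (ihψ _ h).trans (by simp [vars])
  | next φ ih =>
      intro χ h; simp [subs] at h
      rcases h with h | h
      · subst h; simp [vars]
      · simpa [vars] using ih _ h
  | until_ φ ψ ihφ ihψ =>
      intro χ h; simp [subs] at h
      rcases h with h | h | h
      · subst h; simp [vars]
      · exact (ihφ _ h).trans (by simp [vars])
      · exact (ihψ _ h).trans (by simp [vars])
  | ex π φ ih =>
      intro χ h; simp [subs] at h
      rcases h with h | h
      · subst h; simp [vars]
      · simpa [vars] using ih _ h
  | all π φ ih =>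
      intro χ h; simp [subs] at h
      rcases h with h | h
      · subst h; simp [vars]
      · simpa [vars] using ih _ h

end HLTLAux
namespace HLTLAux
open HLTL

lemma shift_shift (A : ℕ → Trace) (n k : ℕ) : shift (shift A n) k = shift A (n + k) := by
  funext π m
  show A π (m + k + n) = A π (m + (n + k))
  rw [Nat.add_assoc, Nat.add_comm k n]

lemma shift_zero (A : ℕ → Trace) : shift A 0 = A := by
  funext π m
  show A π (m + 0) = A π m
  rw [Nat.add_zero]

lemma shift_agree {A A' : ℕ → Trace} {π : ℕ} (k : ℕ) (h : A π = A' π) :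
    shift A k π = shift A' k π := by
  show (fun n => A π (n + k)) = fun n => A' π (n + k)
  rw [h]

lemma update_agree {A A' : ℕ → Trace} (π : ℕ) (t : Trace) {s : Finset ℕ}
    (h : ∀ π' ∈ s.erase π, A π' = A' π') :
    ∀ π' ∈ s, Function.update A π t π' = Function.update A' π t π' := by
  intro π' hπ'
  rcases eq_or_ne π' π with rfl | hne
  · simp
  · rw [Function.update_of_ne hne, Function.update_of_ne hne]
    exact h π' (Finset.mem_erase.mpr ⟨hne, hπ'⟩)

/-- Satisfaction of quantifier-free formulas does not depend on `T`. -/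
lemma sat_T_indep : ∀ χ : HLTL, quantFree χ = true → ∀ (T₁ T₂ : Set Trace) (A : ℕ → Trace),
    sat T₁ χ A ↔ sat T₂ χ A := by
  intro χ
  induction χ with
  | tt => intro _ T₁ T₂ A; simp [sat]
  | atom a π => intro _ T₁ T₂ A; simp [sat]
  | neg φ ih => intro h T₁ T₂ A; simp only [sat]; rw [ih (by simpa [quantFree] using h)]
  | or φ ψ ihφ ihψ =>
      intro h T₁ T₂ A
      simp only [quantFree, Bool.and_eq_true] at h
      simp only [sat]; rw [ihφ h.1, ihψ h.2]
  | next φ ih => intro h T₁ T₂ A; simp only [sat]; rw [ih (by simpa [quantFree] using h)]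
  | until_ φ ψ ihφ ihψ =>
      intro h T₁ T₂ A
      simp only [quantFree, Bool.and_eq_true] at h
      simp only [sat]
      constructor
      · rintro ⟨i, h1, h2⟩
        exact ⟨i, (ihψ h.2 T₁ T₂ _).mp h1, fun j hj => (ihφ h.1 T₁ T₂ _).mp (h2 j hj)⟩
      · rintro ⟨i, h1, h2⟩
        exact ⟨i, (ihψ h.2 T₁ T₂ _).mpr h1, fun j hj => (ihφ h.1 T₁ T₂ _).mpr (h2 j hj)⟩
  | ex π φ ih => intro h; simp [quantFree] at h
  | all π φ ih => intro h; simp [quantFree] at h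

/-- Satisfaction only depends on the assignment on free variables. -/
lemma sat_congr : ∀ (χ : HLTL) (T : Set Trace) (A A' : ℕ → Trace),
    (∀ π ∈ free χ, A π = A' π) → (sat T χ A ↔ sat T χ A') := by
  intro χ
  induction χ with
  | tt => intro T A A' h; simp [sat]
  | atom a π =>
      intro T A A' h
      simp only [sat]
      rw [h π (by simp [free])]
  | neg φ ih =>
      intro T A A' h
      simp only [sat]
      rw [ih T A A' (by simpa [free] using h)]
  | or φ ψ ihφ ihψ =>
      intro T A A' h
      simp only [free, Finset.mem_union] at h
      simp only [sat]
      rw [ihφ T A A' (fun π hπ => h π (Or.inl hπ)), ihψ T A A' (fun π hπ => h π (Or.inr hπ))]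
  | next φ ih =>
      intro T A A' h
      simp only [sat]
      exact ih T _ _ (fun π hπ => shift_agree 1 (h π (by simpa [free] using hπ)))
  | until_ φ ψ ihφ ihψ =>
      intro T A A' h
      simp only [free, Finset.mem_union] at h
      simp only [sat]
      constructor
      · rintro ⟨i, h1, h2⟩
        exact ⟨i, (ihψ T _ _ (fun π hπ => shift_agree i (h π (Or.inr hπ)))).mp h1,
          fun j hj => (ihφ T _ _ (fun π hπ => shift_agree j (h π (Or.inl hπ)))).mp (h2 j hj)⟩
      · rintro ⟨i, h1, h2⟩
        exact ⟨i, (ihψ T _ _ (fun π hπ => shift_agree i (h π (Or.inr hπ)))).mpr h1,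
          fun j hj => (ihφ T _ _ (fun π hπ => shift_agree j (h π (Or.inl hπ)))).mpr (h2 j hj)⟩
  | ex π φ ih =>
      intro T A A' h
      simp only [free] at h
      simp only [sat]
      constructor
      · rintro ⟨t, ht, hs⟩
        exact ⟨t, ht, (ih T _ _ (update_agree π t h)).mp hs⟩
      · rintro ⟨t, ht, hs⟩
        exact ⟨t, ht, (ih T _ _ (update_agree π t h)).mpr hs⟩
  | all π φ ih =>
      intro T A A' h
      simp only [free] at h
      simp only [sat]
      constructor
      · intro hs t ht
        exact (ih T _ _ (update_agree π t h)).mp (hs t ht)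
      · intro hs t ht
        exact (ih T _ _ (update_agree π t h)).mpr (hs t ht)

/-- One step unfolding of until. -/
lemma until_iff (T : Set Trace) (α β : HLTL) (A : ℕ → Trace) :
    sat T (.until_ α β) A ↔ sat T β A ∨ (sat T α A ∧ sat T (.until_ α β) (shift A 1)) := by
  constructor
  · rintro ⟨i, hβ, hα⟩
    cases i with
    | zero => exact Or.inl (by rwa [shift_zero] at hβ)
    | succ k =>
      refine Or.inr ⟨by simpa [shift_zero] using hα 0 (Nat.succ_pos k), ⟨k, ?_, ?_⟩⟩
      · rw [shift_shift, Nat.add_comm 1 k]; exact hβ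
      · intro j hj
        rw [shift_shift, Nat.add_comm 1 j]
        exact hα (j + 1) (by omega)
  · rintro (h | ⟨hα, i, hβ, hα'⟩)
    · exact ⟨0, by rwa [shift_zero], fun j hj => (Nat.not_lt_zero j hj).elim⟩
    · rw [shift_shift, Nat.add_comm 1 i] at hβ
      refine ⟨i + 1, hβ, ?_⟩
      intro j hj
      cases j with
      | zero => rwa [shift_zero]
      | succ k =>
        have := hα' k (by omega)
        rwa [shift_shift, Nat.add_comm 1 k] at this

end HLTLAux
namespace HLTLAux

/-- The lasso position map: identity on `[0, j)`, then looping through `[i, j)`. -/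
def pf (i j n : ℕ) : ℕ := if n < j then n else i + (n - i) % (j - i)

section pf
variable {i j : ℕ}

lemma pf_lt (hij : i < j) (n : ℕ) : pf i j n < j := by
  unfold pf
  split
  · omega
  · have := Nat.mod_lt (n - i) (y := j - i) (by omega)
    omega

lemma pf_zero (hij : i < j) : pf i j 0 = 0 := by
  unfold pf
  split <;> omega

lemma pf_eq_of_ge (hij : i < j) (n : ℕ) (hn : i ≤ n) : pf i j n = i + (n - i) % (j - i) := by
  unfold pf
  split
  · rw [Nat.mod_eq_of_lt (by omega)]; omega
  · rfl

lemma pf_add_period (hij : i < j) (n : ℕ) (hn : i ≤ n) : pf i j (n + (j - i)) = pf i j n := by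
  rw [pf_eq_of_ge hij n hn, pf_eq_of_ge hij _ (by omega)]
  congr 1
  have h : n + (j - i) - i = (n - i) + (j - i) := by omega
  rw [h, Nat.add_mod_right]

lemma pf_add_of_lt (hij : i < j) (n e : ℕ) (h : pf i j n + e < j) : pf i j (n + e) = pf i j n + e := by
  by_cases hn : n < j
  · have h1 : pf i j n = n := by unfold pf; simp [hn]
    rw [h1] at h ⊢
    unfold pf
    simp [h]
  · push_neg at hn
    have hni : i ≤ n := by omega
    have hp : 0 < j - i := by omega
    rw [pf_eq_of_ge hij n hni] at h ⊢
    rw [pf_eq_of_ge hij (n + e) (by omega)]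
    have hr : (n - i) % (j - i) + e < j - i := by omega
    have h2 : n + e - i = (n - i) + e := by omega
    rw [h2, ← Nat.mod_add_mod, Nat.mod_eq_of_lt hr]
    omega

lemma pf_wrap (hij : i < j) (n : ℕ) : pf i j (n + (j - pf i j n)) = i := by
  have hq : pf i j n < j := pf_lt hij n
  by_cases hn : n < j
  · have h1 : pf i j n = n := by unfold pf; simp [hn]
    rw [h1]
    have h2 : n + (j - n) = j := by omega
    rw [h2, pf_eq_of_ge hij j (by omega), Nat.mod_self, Nat.add_zero]
  · push_neg at hn
    have hp : 0 < j - i := by omega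
    have hni : i ≤ n := by omega
    have hq' : pf i j n = i + (n - i) % (j - i) := pf_eq_of_ge hij n hni
    have hrlt : (n - i) % (j - i) < j - i := Nat.mod_lt _ hp
    have he : j - pf i j n = (j - i) - (n - i) % (j - i) := by omega
    rw [he]
    rw [pf_eq_of_ge hij _ (by omega)]
    have hdm : (j - i) * ((n - i) / (j - i)) + (n - i) % (j - i) = n - i :=
      Nat.div_add_mod (n - i) (j - i)
    have h3 : n + ((j - i) - (n - i) % (j - i)) - i = (j - i) * ((n - i) / (j - i) + 1) := by
      rw [Nat.mul_add, Nat.mul_one]; omega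
    rw [h3, Nat.mul_mod_right]
    rfl

lemma pf_succ (hij : i < j) (n : ℕ) : pf i j (n + 1) = pf i j n + 1 ∨ (pf i j n + 1 = j ∧ pf i j (n + 1) = i) := by
  have hq := pf_lt hij n
  by_cases h : pf i j n + 1 < j
  · exact Or.inl (pf_add_of_lt hij n 1 h)
  · right
    refine ⟨by omega, ?_⟩
    have hw := pf_wrap hij n
    rw [show j - pf i j n = 1 by omega] at hw
    exact hw

end pf
end HLTLAux
namespace HLTLAux
open HLTL

/-- Key transfer lemma: along the lasso reparametrisation `pf i j`, satisfaction of
quantifier-free subformulas is preserved. -/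
theorem qfKey (T : Set Trace) (ψ : HLTL) (i j : ℕ) (hij : i < j) (A : ℕ → Trace)
    (H1 : ∀ χ ∈ subs ψ, sat T χ (shift A i) ↔ sat T χ (shift A j))
    (H2 : ∀ α β : HLTL, .until_ α β ∈ subs ψ → sat T (.until_ α β) (shift A i) →
      ∃ d, i + d < j ∧ sat T β (shift A (i + d)) ∧ ∀ e < d, sat T α (shift A (i + e))) :
    ∀ χ : HLTL, χ ∈ subs ψ → quantFree χ = true → ∀ n : ℕ,
      (sat T χ (shift (fun π m => A π (pf i j m)) n) ↔ sat T χ (shift A (pf i j n))) := by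
  intro χ
  induction χ with
  | tt => intro _ _ n; simp [sat]
  | atom a π =>
      intro _ _ n
      simp only [sat]
      show a ∈ A π (pf i j (0 + n)) ↔ a ∈ A π (0 + pf i j n)
      rw [Nat.zero_add, Nat.zero_add]
  | neg φ ih =>
      intro hmem hqf n
      simp only [sat]
      rw [ih (neg_mem_subs hmem) (by simpa [quantFree] using hqf) n]
  | or φ φ' ihφ ihφ' =>
      intro hmem hqf n
      simp only [quantFree, Bool.and_eq_true] at hqf
      simp only [sat]
      rw [ihφ (or_mem_subs hmem).1 hqf.1 n, ihφ' (or_mem_subs hmem).2 hqf.2 n]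
  | next φ ih =>
      intro hmem hqf n
      simp only [sat]
      rw [shift_shift, shift_shift]
      rw [ih (next_mem_subs hmem) (by simpa [quantFree] using hqf) (n + 1)]
      rcases pf_succ hij n with h | ⟨hj', hi'⟩
      · rw [h]
      · rw [hi', hj']
        exact H1 φ (next_mem_subs hmem)
  | until_ α β ihα ihβ =>
      intro hmem hqf n
      obtain ⟨hmα, hmβ⟩ := until_mem_subs hmem
      simp only [quantFree, Bool.and_eq_true] at hqf
      obtain ⟨hqα, hqβ⟩ := hqf
      have hqlt : pf i j n < j := pf_lt hij n
      simp only [sat]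
      constructor
      · rintro ⟨d, hd1, hd2⟩
        rw [shift_shift] at hd1
        have hβ' : sat T β (shift A (pf i j (n + d))) := (ihβ hmβ hqβ (n + d)).mp hd1
        have hα' : ∀ e < d, sat T α (shift A (pf i j (n + e))) := by
          intro e he
          have := hd2 e he
          rw [shift_shift] at this
          exact (ihα hmα hqα (n + e)).mp this
        have main : ∀ k, k ≤ d → sat T (.until_ α β) (shift A (pf i j (n + (d - k)))) := by
          intro k
          induction k with
          | zero =>
              intro _
              rw [Nat.sub_zero]
              exact (until_iff T α β _).mpr (Or.inl hβ')
          | succ k ihk =>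
              intro hk
              have hprev := ihk (by omega)
              rw [show d - k = (d - (k+1)) + 1 by omega,
                  show n + ((d - (k+1)) + 1) = (n + (d - (k+1))) + 1 by omega] at hprev
              have hstep : sat T (.until_ α β) (shift A (pf i j (n + (d - (k+1))) + 1)) := by
                rcases pf_succ hij (n + (d - (k+1))) with h | ⟨hj', hi'⟩
                · rwa [h] at hprev
                · rw [hi'] at hprev
                  rw [hj']
                  exact (H1 _ hmem).mp hprev
              refine (until_iff T α β _).mpr (Or.inr ⟨hα' _ (by omega), ?_⟩)
              rw [shift_shift]
              exact hstep
        have := main d le_rfl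
        rwa [Nat.sub_self, Nat.add_zero] at this
      · rintro ⟨i₀, hβ0, hα0⟩
        rw [shift_shift] at hβ0
        classical
        have hex : ∃ d, sat T β (shift A (pf i j n + d)) := ⟨i₀, hβ0⟩
        have hdmβ : sat T β (shift A (pf i j n + Nat.find hex)) := Nat.find_spec hex
        have hdmle : Nat.find hex ≤ i₀ := Nat.find_min' hex hβ0
        have hαlt : ∀ e < Nat.find hex, sat T α (shift A (pf i j n + e)) := by
          intro e he
          have := hα0 e (lt_of_lt_of_le he hdmle)
          rwa [shift_shift] at this
        by_cases hcase : pf i j n + Nat.find hex < j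
        · refine ⟨Nat.find hex, ?_, ?_⟩
          · rw [shift_shift]
            exact (ihβ hmβ hqβ (n + Nat.find hex)).mpr
              (by rw [pf_add_of_lt hij n _ hcase]; exact hdmβ)
          · intro e he
            rw [shift_shift]
            exact (ihα hmα hqα (n + e)).mpr
              (by rw [pf_add_of_lt hij n e (by omega)]; exact hαlt e he)
        · push_neg at hcase
          have he₀le : j - pf i j n ≤ Nat.find hex := by omega
          have hi₀ge : j - pf i j n ≤ i₀ := le_trans he₀le hdmle
          have hsatj : sat T (.until_ α β) (shift A j) := by
            refine ⟨i₀ - (j - pf i j n), ?_, ?_⟩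
            · rw [shift_shift, show j + (i₀ - (j - pf i j n)) = pf i j n + i₀ by omega]
              exact hβ0
            · intro e he'
              rw [shift_shift, show j + e = pf i j n + ((j - pf i j n) + e) by omega]
              have := hα0 ((j - pf i j n) + e) (by omega)
              rwa [shift_shift] at this
          have hsati : sat T (.until_ α β) (shift A i) := (H1 _ hmem).mpr hsatj
          obtain ⟨di, hdi1, hdi2, hdi3⟩ := H2 α β hmem hsati
          have hwrap : pf i j (n + (j - pf i j n)) = i := pf_wrap hij n
          refine ⟨(j - pf i j n) + di, ?_, ?_⟩
          · rw [shift_shift]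
            refine (ihβ hmβ hqβ _).mpr ?_
            have hpos : pf i j (n + ((j - pf i j n) + di)) = i + di := by
              rw [show n + ((j - pf i j n) + di) = (n + (j - pf i j n)) + di by omega,
                  pf_add_of_lt hij (n + (j - pf i j n)) di (by rw [hwrap]; exact hdi1), hwrap]
            rw [hpos]
            exact hdi2
          · intro e he'
            rw [shift_shift]
            refine (ihα hmα hqα (n + e)).mpr ?_
            by_cases h5 : e < j - pf i j n
            · rw [pf_add_of_lt hij n e (by omega)]
              exact hαlt e (by omega)
            · push_neg at h5
              have hpos : pf i j (n + e) = i + (e - (j - pf i j n)) := by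
                rw [show n + e = (n + (j - pf i j n)) + (e - (j - pf i j n)) by omega,
                    pf_add_of_lt hij (n + (j - pf i j n)) _ (by rw [hwrap]; omega), hwrap]
              rw [hpos]
              exact hdi3 _ (by omega)
  | ex π φ ih => intro _ hqf; simp [quantFree] at hqf
  | all π φ ih => intro _ hqf; simp [quantFree] at hqf

end HLTLAux
namespace HLTLAux
open HLTL

/-- Extend an assignment of the finitely many relevant variables to a full assignment. -/
def extAssign (L : Finset ℕ) (t₀ : Trace) (T : Set Trace)
    (ρ : {x // x ∈ L} → {t // t ∈ T}) : ℕ → Trace :=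
  fun π => if h : π ∈ L then (ρ ⟨π, h⟩).1 else t₀

lemma extAssign_eq {L : Finset ℕ} {t₀ : Trace} {T : Set Trace}
    {ρ : {x // x ∈ L} → {t // t ∈ T}} {π : ℕ} (h : π ∈ L) :
    extAssign L t₀ T ρ π = (ρ ⟨π, h⟩).1 := dif_pos h

/-- There are positions `i < j` that are equivalent for all subformulas under all relevant
assignments, such that all untils true at `i` are fulfilled before `j`. -/
theorem exists_good (T : Set Trace) (hT : T.Finite) (t₀ : Trace) (ht₀ : t₀ ∈ T) (ψ : HLTL) :
    ∃ i j : ℕ, i < j ∧ ∀ A : ℕ → Trace, (∀ π, A π ∈ T) →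
      (∀ χ ∈ subs ψ, (sat T χ (shift A i) ↔ sat T χ (shift A j))) ∧
      (∀ α β : HLTL, .until_ α β ∈ subs ψ → sat T (.until_ α β) (shift A i) →
        ∃ d, i + d < j ∧ sat T β (shift A (i + d)) ∧ ∀ e < d, sat T α (shift A (i + e))) := by
  classical
  haveI : Fintype ↑T := hT.fintype
  set L : Finset ℕ := vars ψ with hL
  set X := ({x // x ∈ L} → {t // t ∈ T}) × {χ // χ ∈ subs ψ} with hX
  set g : ℕ → Set X := fun k => {x | sat T x.2.1 (shift (extAssign L t₀ T x.1) k)} with hg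
  obtain ⟨S, hS⟩ := Finite.exists_infinite_fiber g
  have hSinf : (g ⁻¹' {S}).Infinite := Set.infinite_coe_iff.mp hS
  obtain ⟨i, hi⟩ := hSinf.nonempty
  have hgi : g i = S := hi
  -- a uniform bound on fulfillment positions for untils true at `i`
  have hD : ∀ x : X, ∃ d : ℕ, ∀ α β : HLTL, x.2.1 = .until_ α β →
      sat T x.2.1 (shift (extAssign L t₀ T x.1) i) →
      sat T β (shift (extAssign L t₀ T x.1) (i + d)) ∧
        ∀ e < d, sat T α (shift (extAssign L t₀ T x.1) (i + e)) := by
    intro x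
    by_cases hx : ∃ α β : HLTL, x.2.1 = .until_ α β ∧
        sat T x.2.1 (shift (extAssign L t₀ T x.1) i)
    · obtain ⟨α, β, heq, hs⟩ := hx
      rw [heq] at hs
      obtain ⟨d, hd1, hd2⟩ := hs
      rw [shift_shift] at hd1
      refine ⟨d, ?_⟩
      intro α' β' heq' _
      rw [heq] at heq'
      injection heq' with h1 h2
      subst h1; subst h2
      refine ⟨hd1, ?_⟩
      intro e he
      have := hd2 e he
      rwa [shift_shift] at this
    · exact ⟨0, fun α β heq hs => absurd ⟨α, β, heq, hs⟩ hx⟩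
  choose dfun hdfun using hD
  set D := (Finset.univ : Finset X).sup dfun with hD'
  obtain ⟨j, hjmem, hjgt⟩ := hSinf.exists_gt (i + D)
  have hgj : g j = S := hjmem
  refine ⟨i, j, by omega, ?_⟩
  intro A hA
  set ρ : {x // x ∈ L} → {t // t ∈ T} := fun x => ⟨A x.1, hA x.1⟩ with hρ
  have hAgree : ∀ χ ∈ subs ψ, ∀ k : ℕ,
      (sat T χ (shift A k) ↔ sat T χ (shift (extAssign L t₀ T ρ) k)) := by
    intro χ hχ k
    apply sat_congr
    intro π hπ
    have hπL : π ∈ L := vars_subs ψ χ hχ (free_subset_vars χ hπ)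
    refine shift_agree k ?_
    rw [extAssign_eq hπL]
  have hmemiff : ∀ (χ : HLTL) (hχ : χ ∈ subs ψ),
      (sat T χ (shift (extAssign L t₀ T ρ) i) ↔ sat T χ (shift (extAssign L t₀ T ρ) j)) := by
    intro χ hχ
    have h1 : (ρ, ⟨χ, hχ⟩) ∈ g i ↔ (ρ, ⟨χ, hχ⟩) ∈ g j := by rw [hgi, hgj]
    exact h1
  constructor
  · intro χ hχ
    exact (hAgree χ hχ i).trans ((hmemiff χ hχ).trans (hAgree χ hχ j).symm)
  · intro α β hχ hs
    have hαχ := (until_mem_subs hχ).1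
    have hβχ := (until_mem_subs hχ).2
    have hs' : sat T (.until_ α β) (shift (extAssign L t₀ T ρ) i) := (hAgree _ hχ i).mp hs
    have hd := hdfun (ρ, ⟨.until_ α β, hχ⟩) α β rfl hs'
    refine ⟨dfun (ρ, ⟨.until_ α β, hχ⟩), ?_, ?_, ?_⟩
    · have : dfun (ρ, ⟨.until_ α β, hχ⟩) ≤ D := Finset.le_sup (Finset.mem_univ _)
      omega
    · exact (hAgree β hβχ _).mpr hd.1
    · intro e he
      exact (hAgree α hαχ _).mpr (hd.2 e he)

/-- Base case of the prefix induction: quantifier-free formulas transfer to the lasso. -/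
lemma qfBase (T : Set Trace) (ψ : HLTL) (i j : ℕ) (hij : i < j)
    (H : ∀ A : ℕ → Trace, (∀ π, A π ∈ T) →
      (∀ χ ∈ subs ψ, (sat T χ (shift A i) ↔ sat T χ (shift A j))) ∧
      (∀ α β : HLTL, .until_ α β ∈ subs ψ → sat T (.until_ α β) (shift A i) →
        ∃ d, i + d < j ∧ sat T β (shift A (i + d)) ∧ ∀ e < d, sat T α (shift A (i + e))))
    (ξ : HLTL) (hmem : ξ ∈ subs ψ) (hqf : quantFree ξ = true)
    (A : ℕ → Trace) (hA : ∀ π, A π ∈ T) (hs : sat T ξ A) :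
    sat ((fun t => fun n => t (pf i j n)) '' T) ξ (fun π n => A π (pf i j n)) := by
  obtain ⟨Hi, Hu⟩ := H A hA
  have hkey := qfKey T ψ i j hij A Hi Hu ξ hmem hqf 0
  rw [pf_zero hij, shift_zero, shift_zero] at hkey
  exact (sat_T_indep ξ hqf T _ _).mp (hkey.mpr hs)

/-- Prefix induction: a prenex sentence transfers from `T` to its lasso image. -/
theorem prefixTransfer (T : Set Trace) (ψ : HLTL) (i j : ℕ) (hij : i < j)
    (H : ∀ A : ℕ → Trace, (∀ π, A π ∈ T) →
      (∀ χ ∈ subs ψ, (sat T χ (shift A i) ↔ sat T χ (shift A j))) ∧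
      (∀ α β : HLTL, .until_ α β ∈ subs ψ → sat T (.until_ α β) (shift A i) →
        ∃ d, i + d < j ∧ sat T β (shift A (i + d)) ∧ ∀ e < d, sat T α (shift A (i + e)))) :
    ∀ ξ : HLTL, ξ ∈ subs ψ → prenex ξ = true → ∀ A : ℕ → Trace, (∀ π, A π ∈ T) →
      sat T ξ A → sat ((fun t => fun n => t (pf i j n)) '' T) ξ (fun π n => A π (pf i j n)) := by
  intro ξ
  induction ξ with
  | tt => exact fun hmem hpre A hA hs => qfBase T ψ i j hij H _ hmem hpre A hA hs
  | atom a π => exact fun hmem hpre A hA hs => qfBase T ψ i j hij H _ hmem hpre A hA hs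
  | neg φ _ => exact fun hmem hpre A hA hs => qfBase T ψ i j hij H _ hmem hpre A hA hs
  | or φ φ' _ _ => exact fun hmem hpre A hA hs => qfBase T ψ i j hij H _ hmem hpre A hA hs
  | next φ _ => exact fun hmem hpre A hA hs => qfBase T ψ i j hij H _ hmem hpre A hA hs
  | until_ φ φ' _ _ => exact fun hmem hpre A hA hs => qfBase T ψ i j hij H _ hmem hpre A hA hs
  | ex π φ ih =>
      intro hmem hpre A hA hs
      obtain ⟨t, ht, hs'⟩ := hs
      have hup : ∀ π', Function.update A π t π' ∈ T := by
        intro π'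
        rcases eq_or_ne π' π with rfl | hne
        · simpa using ht
        · simpa [Function.update_of_ne hne] using hA π'
      have hrec := ih (ex_mem_subs hmem) (by simpa [prenex] using hpre) _ hup hs'
      refine ⟨fun n => t (pf i j n), Set.mem_image_of_mem _ ht, ?_⟩
      have heq : (fun π' n => Function.update A π t π' (pf i j n)) =
          Function.update (fun π' n => A π' (pf i j n)) π (fun n => t (pf i j n)) := by
        funext π'
        rcases eq_or_ne π' π with rfl | hne
        · simp
        · simp [Function.update_of_ne hne]
      rw [← heq]
      exact hrec
  | all π φ ih =>
      intro hmem hpre A hA hs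
      rintro t' ⟨t, ht, rfl⟩
      have hup : ∀ π', Function.update A π t π' ∈ T := by
        intro π'
        rcases eq_or_ne π' π with rfl | hne
        · simpa using ht
        · simpa [Function.update_of_ne hne] using hA π'
      have hrec := ih (all_mem_subs hmem) (by simpa [prenex] using hpre) _ hup (hs t ht)
      have heq : (fun π' n => Function.update A π t π' (pf i j n)) =
          Function.update (fun π' n => A π' (pf i j n)) π (fun n => t (pf i j n)) := by
        funext π'
        rcases eq_or_ne π' π with rfl | hne
        · simp
        · simp [Function.update_of_ne hne]
      rw [← heq]
      exact hrec

end HLTLAux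

/-- A HyperLTL formula is satisfiable by some nonempty trace set of
cardinality at most `m` iff it is satisfiable by a nonempty set of at most
`m` ultimately periodic traces. -/
theorem hyperLTLSat_bounded_iff_ultimately_periodic
    (ψ : HLTL) (hψ : HLTL.Sentence ψ) (m : ℕ) :
    (∃ T : Set Trace, T.Finite ∧ T.ncard ≤ m ∧ HLTL.SatBy T ψ) ↔
      (∃ T : Set Trace, T.Finite ∧ T.ncard ≤ m ∧
        (∀ t ∈ T, UltimatelyPeriodic t) ∧ HLTL.SatBy T ψ) := by
  constructor
  · rintro ⟨T, hfin, hcard, hne, hsat⟩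
    obtain ⟨t₀, ht₀⟩ := hne
    obtain ⟨i, j, hij, H⟩ := HLTLAux.exists_good T hfin t₀ ht₀ ψ
    refine ⟨(fun t => fun n => t (HLTLAux.pf i j n)) '' T, hfin.image _,
      le_trans (Set.ncard_image_le hfin) hcard, ?_, ?_, ?_⟩
    · rintro t' ⟨t, ht, rfl⟩
      refine ⟨i, j - i, by omega, fun n hn => ?_⟩
      show t (HLTLAux.pf i j (n + (j - i))) = t (HLTLAux.pf i j n)
      rw [HLTLAux.pf_add_period hij n hn]
    · exact ⟨_, Set.mem_image_of_mem _ ht₀⟩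
    · intro A
      have h0 := HLTLAux.prefixTransfer T ψ i j hij H ψ (HLTLAux.self_mem_subs ψ) hψ.1
        (fun _ => t₀) (fun _ => ht₀) (hsat _)
      exact (HLTLAux.sat_congr ψ _ A _ (by simp [hψ.2])).mpr h0
  · rintro ⟨T, hfin, hcard, _, hsat⟩
    exact ⟨T, hfin, hcard, hsat⟩
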